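/- Define the sequence δ_0 ∈ (0, 1/2) and δ_{t} = δ_{t-1} / (2(1/4 + δ_{t-1}²)) for t ≥ 1. Then the sequence (δ_t) is strictly increasing and converges to 1/2. -/
import Mathlib


open Filter Topology

theorem stmt_1 (d : ℕ → ℝ) (h0 : d 0 ∈ Set.Ioo (0:ℝ) (1/2))
    (hrec : ∀ t : ℕ, d (t+1) = d t / (2 * (1/4 + (d t)^2))) :
    StrictMono d ∧ Tendsto d atTop (𝓝 (1/2)) := by
  -- invariant
  have hI : ∀ t, d t ∈ Set.Ioo (0:ℝ) (1/2) := by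
    intro t
    induction t with
    | zero => exact h0
    | succ n ih =>
      obtain ⟨h1, h2⟩ := ih
      have hden : (0:ℝ) < 2 * (1/4 + (d n)^2) := by positivity
      rw [hrec n]
      constructor
      · positivity
      · rw [div_lt_iff₀ hden]
        nlinarith [sq_nonneg (1/2 - d n)]
  have hmono : StrictMono d := by
    apply strictMono_nat_of_lt_succ
    intro n
    obtain ⟨h1, h2⟩ := hI n
    have hden : (0:ℝ) < 2 * (1/4 + (d n)^2) := by positivity
    rw [hrec n, lt_div_iff₀ hden]
    nlinarith
  refine ⟨hmono, ?_⟩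
  obtain ⟨h01, h02⟩ := h0
  set c : ℝ := (1/2) / (1/2 + 2 * (d 0)^2) with hc
  have hcden : (0:ℝ) < 1/2 + 2 * (d 0)^2 := by positivity
  have hc0 : 0 ≤ c := by positivity
  have hc1 : c < 1 := by
    rw [hc, div_lt_one hcden]; nlinarith
  have hkey : ∀ t, 1/2 - d t ≤ c ^ t * (1/2 - d 0) := by
    intro t
    induction t with
    | zero => simp
    | succ n ih =>
      obtain ⟨h1, h2⟩ := hI n
      have hd0n : d 0 ≤ d n := hmono.monotone (Nat.zero_le n)
      have hden : (0:ℝ) < 2 * (1/4 + (d n)^2) := by positivity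
      have hid : 1/2 - d (n+1) = (1/2 - d n) * ((1/2 - d n) / (2 * (1/4 + (d n)^2))) := by
        rw [hrec n]; field_simp; ring
      have hratio : (1/2 - d n) / (2 * (1/4 + (d n)^2)) ≤ c := by
        rw [hc, div_le_div_iff₀ hden hcden]
        nlinarith [sq_nonneg (d n), sq_nonneg (d 0)]
      have hpos : 0 ≤ 1/2 - d n := by linarith
      calc 1/2 - d (n+1) = (1/2 - d n) * ((1/2 - d n) / (2 * (1/4 + (d n)^2))) := hid
        _ ≤ (1/2 - d n) * c := by
            exact mul_le_mul_of_nonneg_left hratio hpos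
        _ ≤ (c ^ n * (1/2 - d 0)) * c := by
            apply mul_le_mul_of_nonneg_right ih hc0
        _ = c ^ (n+1) * (1/2 - d 0) := by ring
  have htend : Tendsto (fun t => 1/2 - d t) atTop (𝓝 0) := by
    apply squeeze_zero (fun t => by linarith [(hI t).2]) hkey
    have := tendsto_pow_atTop_nhds_zero_of_lt_one hc0 hc1
    simpa using this.mul_const (1/2 - d 0)
  have : Tendsto (fun t => 1/2 - (1/2 - d t)) atTop (𝓝 (1/2 - 0)) :=
    tendsto_const_nhds.sub htend
  simpa using this
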